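/- Consider the two-action, two-state persuasion instance parametrized by δ ∈ (0,1): states are 'rainy' and 'sunny'; the receiver's payoffs are r_walk(rainy) = 1−δ, r_walk(sunny) = 1, r_drive(rainy) = 1, r_drive(sunny) = 0; the sender's payoffs are s_walk = 1 and s_drive = 0 in both states. Let λ_r be the point distribution on 'rainy' and let λ_s satisfy λ_s(rainy) = 1/(1+2δ) and λ_s(sunny) = 2δ/(1+2δ). Then: (i) every incentive-compatible direct scheme for λ_r recommends 'drive' with probability 1, so every IC scheme has expected sender utility 0 under λ_r; (ii) the scheme that always recommends 'walk' is incentive compatible for λ_s and has expected sender utility 1; and (iii) the total variation distance between λ_r and λ_s equals 2δ/(1+2δ). -/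

import Mathlib

open Finset

namespace RainShine

-- states: `true` = rainy, `false` = sunny; actions: `true` = walk, `false` = drive

/-- receiver payoffs: walking gives `1 − δ` on a rainy day and `1` on a sunny day;
driving gives `1` on a rainy day and `0` on a sunny day -/
noncomputable def rcv (δ : ℝ) (θ : Bool) (i : Bool) : ℝ :=
  if i then (if θ then 1 - δ else 1) else (if θ then 1 else 0)

/-- sender payoffs: walking gives `1`, driving gives `0`, in both states -/
def snd (_θ : Bool) (i : Bool) : ℝ := if i then 1 else 0

/-- the point distribution on the rainy state -/
def lamR : Bool → ℝ := fun θ => if θ then 1 else 0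

/-- the distribution with `λ_s(rainy) = 1/(1+2δ)` and `λ_s(sunny) = 2δ/(1+2δ)` -/
noncomputable def lamS (δ : ℝ) : Bool → ℝ :=
  fun θ => if θ then 1 / (1 + 2 * δ) else 2 * δ / (1 + 2 * δ)

/-- a direct signaling scheme (signal `true` recommends walking,
signal `false` recommends driving) -/
def IsScheme (φ : Bool → Bool → ℝ) : Prop :=
  (∀ θ i, 0 ≤ φ θ i) ∧ ∀ θ, ∑ i, φ θ i = 1

/-- incentive compatibility for the distribution `μ` -/
def IC (δ : ℝ) (μ : Bool → ℝ) (φ : Bool → Bool → ℝ) : Prop :=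
  ∀ i j : Bool, ∑ θ, μ θ * φ θ i * rcv δ θ j ≤ ∑ θ, μ θ * φ θ i * rcv δ θ i

/-- expected sender utility -/
def senderUtil (μ : Bool → ℝ) (φ : Bool → Bool → ℝ) : ℝ :=
  ∑ θ, ∑ i, μ θ * φ θ i * snd θ i

end RainShine

open RainShine

/-- in the rain-and-shine instance with parameter `δ ∈ (0,1)`:
(i) every incentive-compatible direct scheme for `λ_r` recommends driving with
probability `1` and has expected sender utility `0`; (ii) always recommending walking
is incentive compatible for `λ_s` and has expected sender utility `1`; and (iii) the
total variation distance between `λ_r` and `λ_s` equals `2δ/(1+2δ)`. -/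
theorem rain_shine_instance (δ : ℝ) (hδ0 : 0 < δ) (hδ1 : δ < 1) :
    (∀ φ : Bool → Bool → ℝ, IsScheme φ → IC δ lamR φ →
      (∑ θ, lamR θ * φ θ true) = 0 ∧
      (∑ θ, lamR θ * φ θ false) = 1 ∧
      senderUtil lamR φ = 0) ∧
    (IsScheme (fun _ i => if i then 1 else 0) ∧
      IC δ (lamS δ) (fun _ i => if i then 1 else 0) ∧
      senderUtil (lamS δ) (fun _ i => if i then 1 else 0) = 1) ∧
    (1 / 2) * ∑ θ, |lamR θ - lamS δ θ| = 2 * δ / (1 + 2 * δ) := by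
  have hpos : (0:ℝ) < 1 + 2*δ := by linarith
  refine ⟨?_, ⟨⟨?_, ?_⟩, ?_, ?_⟩, ?_⟩
  · intro φ hφ hic
    have h1 := hic true false
    simp [lamR, rcv, Fintype.sum_bool] at h1
    have h0 : φ true true = 0 := by nlinarith [hφ.1 true true]
    have h2 := hφ.2 true
    simp [Fintype.sum_bool] at h2
    refine ⟨?_, ?_, ?_⟩
    · simp [lamR, Fintype.sum_bool, h0]
    · simp [lamR, Fintype.sum_bool]; linarith
    · simp [senderUtil, snd, lamR, Fintype.sum_bool, h0]
  · intro θ i; cases i <;> simp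
  · intro θ; simp [Fintype.sum_bool]
  · intro i j
    have hinv : (0:ℝ) ≤ (1+2*δ)⁻¹ := by positivity
    have hx : (1+2*δ)⁻¹ * (1+2*δ) = 1 := inv_mul_cancel₀ hpos.ne'
    cases i <;> cases j <;> simp [lamS, rcv, Fintype.sum_bool, div_eq_mul_inv] <;>
      nlinarith [mul_nonneg hδ0.le hinv]
  · simp [senderUtil, snd, lamS, Fintype.sum_bool]
    field_simp
  · have e1 : |lamR true - lamS δ true| = 2*δ/(1+2*δ) := by
      simp only [lamR, lamS, if_true]
      rw [abs_of_nonneg (by rw [sub_nonneg, div_le_one hpos]; linarith)]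
      field_simp
      ring
    have e2 : |lamR false - lamS δ false| = 2*δ/(1+2*δ) := by
      have h : lamR false - lamS δ false = -(2*δ/(1+2*δ)) := by simp [lamR, lamS]
      rw [h, abs_neg, abs_of_nonneg (by positivity)]
    rw [Fintype.sum_bool, e1, e2]; ring
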